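/- arXiv:1704.00191 — 5 statements merged into one kernel-verified Lean document; each statement's English description precedes it below -/
import Mathlib

section
/- If M_R is an (σ,δ)-skew Armendariz module, then M_R is (σ,δ)-skew McCoy. -/
open MulOpposite

/-- `fw σ δ i j` is `f_i^j`, the sum of all words in `σ`, `δ` built with `i` factors of `σ`
and `j - i` factors of `δ`. -/
def fw {R : Type*} [Ring R] (σ δ : R → R) : ℕ → ℕ → R → R
  | 0, 0 => id
  | _ + 1, 0 => fun _ => 0
  | 0, j + 1 => fun a => δ (fw σ δ 0 j a)
  | i + 1, j + 1 => fun a => σ (fw σ δ i j a) + δ (fw σ δ (i + 1) j a)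

/-- Multiplication of the Ore extension `R[x;σ,δ]`, on coefficient sequences. -/
noncomputable def skewMul {R : Type*} [Ring R] (σ δ : R → R) (p q : ℕ →₀ R) : ℕ →₀ R :=
  p.sum fun j a => q.sum fun l b =>
    ∑ i ∈ Finset.range (j + 1), Finsupp.single (i + l) (a * fw σ δ i j b)

/-- The action of `R[x;σ,δ]` on the skew polynomial module `M[x;σ,δ]`, where `M` is a
right `R`-module (a module over `Rᵐᵒᵖ`): `(m x^j)·(b x^l) = Σ_{i≤j} (m·f_i^j(b)) x^{i+l}`. -/
noncomputable def skewSMul {R : Type*} [Ring R] (σ δ : R → R) {M : Type*} [AddCommGroup M]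
    [Module Rᵐᵒᵖ M] (m : ℕ →₀ M) (q : ℕ →₀ R) : ℕ →₀ M :=
  m.sum fun j mm => q.sum fun l b =>
    ∑ i ∈ Finset.range (j + 1), Finsupp.single (i + l) (op (fw σ δ i j b) • mm)

/-- A right `R`-module `M` is `(σ,δ)`-skew McCoy if whenever `m(x) g(x) = 0` in `M[x;σ,δ]`
with `g(x) ≠ 0`, there is a nonzero `a ∈ R` with `m(x) a = 0`. -/
def IsSkewMcCoy {R : Type*} [Ring R] (σ δ : R → R) (M : Type*) [AddCommGroup M]
    [Module Rᵐᵒᵖ M] : Prop :=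
  ∀ (m : ℕ →₀ M) (g : ℕ →₀ R), g ≠ 0 → skewSMul σ δ m g = 0 →
    ∃ a : R, a ≠ 0 ∧ skewSMul σ δ m (Finsupp.single 0 a) = 0

/-- A right `R`-module `M` is `(σ,δ)`-skew Armendariz if `m(x) g(x) = 0` implies
`(m_i x^i)(b_j x^j) = 0` for all `i, j`. -/
def IsSkewArmendariz {R : Type*} [Ring R] (σ δ : R → R) (M : Type*) [AddCommGroup M]
    [Module Rᵐᵒᵖ M] : Prop :=
  ∀ (m : ℕ →₀ M) (g : ℕ →₀ R), skewSMul σ δ m g = 0 →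
    ∀ i j, skewSMul σ δ (Finsupp.single i (m i)) (Finsupp.single j (g j)) = 0

/-- `σ`-compatibility of a right module: `m a = 0 ↔ m σ(a) = 0`. -/
def SigmaCompatible {R : Type*} [Ring R] (σ : R → R) (M : Type*) [AddCommGroup M]
    [Module Rᵐᵒᵖ M] : Prop :=
  ∀ (m : M) (a : R), op a • m = 0 ↔ op (σ a) • m = 0

/-- `δ`-compatibility of a right module: `m a = 0 → m δ(a) = 0`. -/
def DeltaCompatible {R : Type*} [Ring R] (δ : R → R) (M : Type*) [AddCommGroup M]
    [Module Rᵐᵒᵖ M] : Prop :=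
  ∀ (m : M) (a : R), op a • m = 0 → op (δ a) • m = 0

/-- A right module `M` is reduced if `m a = 0` implies `mR ∩ Ma = 0`. -/
def IsReducedModule {R : Type*} [Ring R] (M : Type*) [AddCommGroup M]
    [Module Rᵐᵒᵖ M] : Prop :=
  ∀ (m : M) (a : R), op a • m = 0 →
    ∀ x : M, (∃ r : R, op r • m = x) → (∃ m' : M, op a • m' = x) → x = 0

/-- Condition `(*)`: `m(x) f(x) = 0` implies `m(x) R f(x) = 0`. -/
def StarCondition {R : Type*} [Ring R] (σ δ : R → R) (M : Type*) [AddCommGroup M]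
    [Module Rᵐᵒᵖ M] : Prop :=
  ∀ (m : ℕ →₀ M) (f : ℕ →₀ R), skewSMul σ δ m f = 0 →
    ∀ r : R, skewSMul σ δ m (skewMul σ δ (Finsupp.single 0 r) f) = 0

/-- If `M_R` is an `(σ,δ)`-skew Armendariz module then it is `(σ,δ)`-skew McCoy. -/
theorem skewArmendariz_isSkewMcCoy {R : Type*} [Ring R] (σ : R →+* R) (δ : R → R)
    (hδadd : ∀ a b : R, δ (a + b) = δ a + δ b)
    (hδmul : ∀ a b : R, δ (a * b) = σ a * δ b + δ a * b)
    (M : Type*) [AddCommGroup M] [Module Rᵐᵒᵖ M]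
    (hM : IsSkewArmendariz ⇑σ δ M) : IsSkewMcCoy ⇑σ δ M := by
  intro m g hg hzero
  obtain ⟨j, hj⟩ : ∃ j, g j ≠ 0 := by
    by_contra h
    push_neg at h
    exact hg (Finsupp.ext h)
  refine ⟨g j, hj, ?_⟩
  have hδ0 : δ (0 : R) = 0 := by
    have := hδadd 0 0
    simp only [add_zero] at this
    exact left_eq_add.mp this
  have hfw0 : ∀ k i, fw ⇑σ δ i k (0 : R) = 0 := by
    intro k
    induction k with
    | zero =>
      intro i
      cases i with
      | zero => rfl
      | succ i => rfl
    | succ k ih =>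
      intro i
      cases i with
      | zero =>
        show δ (fw ⇑σ δ 0 k 0) = 0
        rw [ih 0, hδ0]
      | succ i =>
        show σ (fw ⇑σ δ i k 0) + δ (fw ⇑σ δ (i + 1) k 0) = 0
        rw [ih i, ih (i + 1), map_zero, hδ0, add_zero]
  have key : ∀ k, ∀ i ∈ Finset.range (k + 1), op (fw ⇑σ δ i k (g j)) • m k = 0 := by
    intro k i hi
    have h := hM m g hzero k j
    rw [skewSMul] at h
    rw [Finsupp.sum_single_index (by simp)] at h
    rw [Finsupp.sum_single_index (by simp [hfw0])] at h
    have h2 := DFunLike.congr_fun h (i + j)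
    rw [Finsupp.finset_sum_apply] at h2
    simpa [Finsupp.single_apply, Finset.sum_ite_eq', Finset.mem_range.mp hi,
      Nat.lt_succ_iff] using h2
  rw [skewSMul, Finsupp.sum]
  apply Finset.sum_eq_zero
  intro k hk
  rw [Finsupp.sum_single_index (by simp [hfw0])]
  apply Finset.sum_eq_zero
  intro i hi
  rw [key k i hi, Finsupp.single_zero]
end

section
/- If for each i in an index set I, M_i is an (σ_i,δ_i)-skew McCoy right R_i-module, then the product module ∏_{i∈I} M_i is (σ,δ)-skew McCoy as a right ∏_{i∈I} R_i-module, where σ = (σ_i)_{i∈I} and δ = (δ_i)_{i∈I} act componentwise. -/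
open MulOpposite

/-- The opposite of a product ring maps to the product of opposites. -/
def piOpRingHom {ι : Type*} (Rf : ι → Type*) [∀ i, Ring (Rf i)] :
    (∀ i, Rf i)ᵐᵒᵖ →+* ∀ i, (Rf i)ᵐᵒᵖ where
  toFun a i := op (a.unop i)
  map_one' := rfl
  map_mul' _ _ := rfl
  map_zero' := rfl
  map_add' _ _ := rfl

/-- The componentwise right-module structure of `∏ M_i` over `∏ R_i`. -/
noncomputable instance piOpModule {ι : Type*} (Rf : ι → Type*) [∀ i, Ring (Rf i)]
    (Mf : ι → Type*) [∀ i, AddCommGroup (Mf i)] [∀ i, Module (Rf i)ᵐᵒᵖ (Mf i)] :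
    Module (∀ i, Rf i)ᵐᵒᵖ (∀ i, Mf i) :=
  Module.compHom _ (piOpRingHom Rf)

section Aux

variable {ι : Type*} (Rf : ι → Type*) [∀ i, Ring (Rf i)]
  (Mf : ι → Type*) [∀ i, AddCommGroup (Mf i)] [∀ i, Module (Rf i)ᵐᵒᵖ (Mf i)]
  (σ : ∀ i, Rf i →+* Rf i) (δ : ∀ i, Rf i → Rf i)

lemma fw_pi_apply (hδ0 : ∀ i, δ i 0 = 0) :
    ∀ (i j : ℕ) (b : ∀ k, Rf k) (k : ι),
      fw (fun a k => σ k (a k)) (fun a k => δ k (a k)) i j b k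
        = fw (⇑(σ k)) (δ k) i j (b k) := by
  intro i j
  induction j generalizing i with
  | zero =>
    cases i with
    | zero => intro b k; rfl
    | succ i => intro b k; rfl
  | succ j ih =>
    cases i with
    | zero => intro b k; simp only [fw]; rw [← ih 0]
    | succ i =>
      intro b k
      simp only [fw, Pi.add_apply]
      rw [← ih i, ← ih (i+1)]

lemma fw_zero' {R : Type*} [Ring R] (σ : R →+* R) (δ : R → R) (hδ0 : δ 0 = 0) :
    ∀ i j : ℕ, fw (⇑σ) δ i j (0 : R) = 0 := by
  intro i j
  induction j generalizing i with
  | zero => cases i <;> simp [fw]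
  | succ j ih =>
    cases i with
    | zero => simp [fw, ih 0, hδ0]
    | succ i => simp [fw, ih i, ih (i+1), hδ0]

lemma pi_op_smul (a : ∀ i, Rf i) (m : ∀ i, Mf i) (k : ι) :
    (op a • m) k = op (a k) • m k := rfl

/-- Projection of a finsupp to its `k`-th component. -/
noncomputable def projF (k : ι) (m : ℕ →₀ (∀ i, Mf i)) : ℕ →₀ Mf k :=
  Finsupp.mapRange (fun v => v k) rfl m

noncomputable def projR (k : ι) (g : ℕ →₀ (∀ i, Rf i)) : ℕ →₀ Rf k :=
  Finsupp.mapRange (fun v => v k) rfl g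

lemma skewSMul_pi_apply (hδ0 : ∀ i, δ i 0 = 0)
    (m : ℕ →₀ (∀ i, Mf i)) (g : ℕ →₀ (∀ i, Rf i)) (n : ℕ) (k : ι) :
    (skewSMul (fun a i => σ i (a i)) (fun a i => δ i (a i)) m g) n k
      = (skewSMul (⇑(σ k)) (δ k) (projF Mf k m) (projR Rf k g)) n := by
  classical
  have hsub1 : (projF Mf k m).support ⊆ m.support := Finsupp.support_mapRange
  have hsub2 : (projR Rf k g).support ⊆ g.support := Finsupp.support_mapRange
  simp only [projF, projR] at hsub1 hsub2 ⊢
  unfold skewSMul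
  simp only [Finsupp.sum, Finsupp.finset_sum_apply, Finset.sum_apply,
    Finsupp.single_apply, Finsupp.mapRange_apply]
  rw [Finset.sum_subset hsub1 ?_]
  · refine Finset.sum_congr rfl fun j hj => ?_
    rw [Finset.sum_subset hsub2 ?_]
    · refine Finset.sum_congr rfl fun l hl => ?_
      refine Finset.sum_congr rfl fun i hi => ?_
      by_cases h : i + l = n
      · simp only [h, if_true]
        have := fw_pi_apply Rf σ δ hδ0 i j (g l) k
        rw [pi_op_smul, this]
      · simp [h]
    · intro l _ hl
      rw [Finsupp.notMem_support_iff, Finsupp.mapRange_apply] at hl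
      refine Finset.sum_eq_zero fun i _ => ?_
      simp [hl, fw_zero' (σ k) (δ k) (hδ0 k)]
  · intro j _ hj
    rw [Finsupp.notMem_support_iff, Finsupp.mapRange_apply] at hj
    refine Finset.sum_eq_zero fun l _ => Finset.sum_eq_zero fun i _ => ?_
    simp [hj]

lemma skewSMul_zero_right {R : Type*} [Ring R] (σ δ : R → R) {M : Type*}
    [AddCommGroup M] [Module Rᵐᵒᵖ M] (m : ℕ →₀ M) :
    skewSMul σ δ m 0 = 0 := by
  simp [skewSMul]

end Aux

/-- If each `M_i` is an `(σ_i,δ_i)`-skew McCoy right `R_i`-module, then `∏ M_i` is an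
`(σ,δ)`-skew McCoy right `∏ R_i`-module, where `σ`, `δ` act componentwise. -/
theorem pi_isSkewMcCoy {ι : Type*} (Rf : ι → Type*) [∀ i, Ring (Rf i)]
    (Mf : ι → Type*) [∀ i, AddCommGroup (Mf i)] [∀ i, Module (Rf i)ᵐᵒᵖ (Mf i)]
    (σ : ∀ i, Rf i →+* Rf i) (δ : ∀ i, Rf i → Rf i)
    (hδadd : ∀ i, ∀ a b : Rf i, δ i (a + b) = δ i a + δ i b)
    (hδmul : ∀ i, ∀ a b : Rf i, δ i (a * b) = σ i a * δ i b + δ i a * b)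
    (hMc : ∀ i, IsSkewMcCoy ⇑(σ i) (δ i) (Mf i)) :
    IsSkewMcCoy (R := ∀ i, Rf i) (fun a i => σ i (a i)) (fun a i => δ i (a i))
      (∀ i, Mf i) := by
  classical
  intro m g hg h0
  have hδ0 : ∀ i, δ i 0 = 0 := fun i => by
    have h := hδadd i 0 0
    simp only [add_zero] at h
    exact (left_eq_add.mp h)
  obtain ⟨n, hn⟩ : ∃ n, g n ≠ 0 := by
    by_contra h
    push_neg at h
    exact hg (Finsupp.ext h)
  obtain ⟨k, hk⟩ : ∃ k, g n k ≠ 0 := by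
    by_contra h
    push_neg at h
    exact hn (funext h)
  have hproj : skewSMul (⇑(σ k)) (δ k) (projF Mf k m) (projR Rf k g) = 0 := by
    ext n'
    rw [← skewSMul_pi_apply Rf Mf σ δ hδ0 m g n' k, h0]
    rfl
  have hgk : projR Rf k g ≠ 0 := fun h =>
    hk (by simpa [projR, Finsupp.mapRange_apply] using DFunLike.congr_fun h n)
  obtain ⟨a, ha, hma⟩ := hMc k (projF Mf k m) (projR Rf k g) hgk hproj
  refine ⟨Function.update (0 : ∀ i, Rf i) k a, ?_, ?_⟩
  · intro h
    apply ha
    have := congrFun h k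
    simpa using this
  · ext n' k'
    rw [skewSMul_pi_apply Rf Mf σ δ hδ0]
    have hps : projR Rf k' (Finsupp.single 0 (Function.update (0 : ∀ i, Rf i) k a))
        = Finsupp.single 0 (Function.update (0 : ∀ i, Rf i) k a k') := by
      simp [projR, Finsupp.mapRange_single]
    rw [hps]
    by_cases hkk : k' = k
    · subst hkk
      simp only [Function.update_self]
      exact DFunLike.congr_fun hma n'
    · rw [Function.update_of_ne hkk]
      simp [skewSMul_zero_right]
end

section
/- If M_R is an (σ,δ)-compatible module, then for any m ∈ M, a ∈ R and nonnegative integers i ≤ j, ma = 0 implies m·f_i^j(a) = 0, where f_i^j is the sum of all words in σ and δ with i factors of σ and j−i factors of δ. -/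
open MulOpposite

lemma fw_of_lt {R : Type*} [Ring R] (σ : R →+* R) (δ : R → R)
    (hδadd : ∀ a b : R, δ (a + b) = δ a + δ b) :
    ∀ j i : ℕ, j < i → ∀ a : R, fw ⇑σ δ i j a = 0 := by
  have hδ0 : δ 0 = 0 := by
    have h := hδadd 0 0
    rw [add_zero] at h
    exact left_eq_add.mp h
  intro j
  induction j with
  | zero => intro i hi a; obtain ⟨k, rfl⟩ := Nat.exists_eq_add_of_lt hi; simp [fw]
  | succ j ih =>
    intro i hi a
    obtain ⟨i, rfl⟩ : ∃ k, i = k + 1 := ⟨i - 1, by omega⟩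
    simp only [fw]
    rw [ih i (by omega), ih (i+1) (by omega), map_zero, hδ0, add_zero]

/-- For an `(σ,δ)`-compatible module, `m a = 0` implies `m f_i^j(a) = 0` for all `i ≤ j`. -/
theorem compatible_fw {R : Type*} [Ring R] (σ : R →+* R) (δ : R → R)
    (hδadd : ∀ a b : R, δ (a + b) = δ a + δ b)
    (hδmul : ∀ a b : R, δ (a * b) = σ a * δ b + δ a * b)
    (M : Type*) [AddCommGroup M] [Module Rᵐᵒᵖ M]
    (hσ : SigmaCompatible ⇑σ M) (hδc : DeltaCompatible δ M) :
    ∀ (m : M) (a : R), op a • m = 0 → ∀ i j : ℕ, i ≤ j →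
      op (fw ⇑σ δ i j a) • m = 0 := by
  intro m a ha i j
  induction j generalizing i with
  | zero =>
    intro hi
    interval_cases i
    simpa [fw] using ha
  | succ j ih =>
    intro hi
    rcases i with _ | i
    · simpa only [fw] using hδc m (fw ⇑σ δ 0 j a) (ih 0 (Nat.zero_le _))
    · simp only [fw, op_add, add_smul]
      have h1 : op (σ (fw ⇑σ δ i j a)) • m = 0 :=
        (hσ m _).mp (ih i (by omega))
      have h2 : op (δ (fw ⇑σ δ (i + 1) j a)) • m = 0 := by
        rcases Nat.lt_or_ge j (i + 1) with h | h
        · rw [fw_of_lt σ δ hδadd j (i+1) h]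
          have hδ0 : δ 0 = 0 := by
            have h := hδadd 0 0
            rw [add_zero] at h
            exact left_eq_add.mp h
          simp [hδ0]
        · exact hδc m _ (ih (i+1) h)
      rw [h1, h2, add_zero]
end

section
/- Suppose M_R is (σ,δ)-skew Armendariz and satisfies the condition (C_σ): for m ∈ M and a ∈ R, mσ(a) = 0 implies ma = 0. If m(x) = Σ_{i=0}^p m_i x^i ∈ M[x;σ,δ] and f(x) = Σ_{j=0}^q a_j x^j ∈ R[x;σ,δ] satisfy m(x)f(x) = 0, then m_i a_j = 0 for all i, j. -/
open MulOpposite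

section Aux
variable {R : Type*} [Ring R] (σ : R →+* R) (δ : R → R)

lemma fw_zero_arg (hδ0 : δ 0 = 0) : ∀ i j, fw ⇑σ δ i j 0 = 0 := by
  intro i j
  induction j generalizing i with
  | zero => cases i <;> simp [fw]
  | succ j ih =>
    cases i with
    | zero => simp [fw, ih 0, hδ0]
    | succ i => simp [fw, ih, hδ0]

lemma fw_gt (hδ0 : δ 0 = 0) : ∀ i j, j < i → ∀ a, fw ⇑σ δ i j a = 0 := by
  intro i j
  induction j generalizing i with
  | zero =>
    intro h a
    cases i with
    | zero => omega
    | succ i => simp [fw]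
  | succ j ih =>
    intro h a
    cases i with
    | zero => omega
    | succ i =>
      simp [fw, ih i (by omega) a, ih (i+1) (by omega) a, hδ0]

lemma fw_diag (hδ0 : δ 0 = 0) : ∀ i a, fw ⇑σ δ i i a = σ^[i] a := by
  intro i
  induction i with
  | zero => intro a; simp [fw]
  | succ i ih =>
    intro a
    simp [fw, ih, fw_gt σ δ hδ0 (i+1) i (by omega), hδ0,
      Function.iterate_succ_apply']

variable {M : Type*} [AddCommGroup M] [Module Rᵐᵒᵖ M]

lemma skewSMul_single_single (hδ0 : δ 0 = 0) (i l : ℕ) (mm : M) (b : R) :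
    skewSMul ⇑σ δ (Finsupp.single i mm) (Finsupp.single l b) =
      ∑ k ∈ Finset.range (i + 1), Finsupp.single (k + l) (op (fw ⇑σ δ k i b) • mm) := by
  unfold skewSMul
  rw [Finsupp.sum_single_index, Finsupp.sum_single_index]
  · simp [fw_zero_arg σ δ hδ0]
  · simp

end Aux

/-- If `M_R` is `(σ,δ)`-skew Armendariz and satisfies condition `(C_σ)`
(`m σ(a) = 0 ⟹ m a = 0`), then `m(x) f(x) = 0` implies `m_i a_j = 0` for all `i, j`. -/
theorem armendariz_Csigma_coeffs {R : Type*} [Ring R] (σ : R →+* R) (δ : R → R)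
    (hδadd : ∀ a b : R, δ (a + b) = δ a + δ b)
    (hδmul : ∀ a b : R, δ (a * b) = σ a * δ b + δ a * b)
    (M : Type*) [AddCommGroup M] [Module Rᵐᵒᵖ M]
    (hArm : IsSkewArmendariz ⇑σ δ M)
    (hC : ∀ (m : M) (a : R), op (σ a) • m = 0 → op a • m = 0) :
    ∀ (m : ℕ →₀ M) (f : ℕ →₀ R), skewSMul ⇑σ δ m f = 0 →
      ∀ i j : ℕ, op (f j) • m i = 0 := by
  intro m f hmf i j
  have h := hArm m f hmf i j
  have hδ0 : δ 0 = 0 := by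
    have := hδadd 0 0; simpa using this.symm
  rw [skewSMul_single_single σ δ hδ0] at h
  have h2 := congrFun (congrArg (fun g : ℕ →₀ M => (g : ℕ → M)) h) (i + j)
  simp only [Finsupp.coe_zero, Pi.zero_apply, Finsupp.coe_finset_sum,
    Finset.sum_apply, Finsupp.single_apply] at h2
  rw [Finset.sum_eq_single i] at h2
  · simp only [if_pos rfl, if_true, fw_diag σ δ hδ0] at h2
    have key : ∀ n (mm : M) (a : R), op ((⇑σ)^[n] a) • mm = 0 → op a • mm = 0 := by
      intro n
      induction n with
      | zero => intro mm a h; simpa using h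
      | succ n ih =>
        intro mm a h
        rw [Function.iterate_succ_apply] at h
        exact hC _ _ (ih _ _ h)
    exact key i _ _ h2
  · intro k hk hki
    rw [if_neg (by omega)]
  · intro hi; simp at hi
end

section
/- Let M_R be an (σ,δ)-compatible module such that ma² = 0 implies ma = 0 for all m ∈ M, a ∈ R. Then: (1) mσ(a)a = 0 implies ma = 0 and mσ(a) = 0; (2) maσ(a) = 0 implies ma = 0 and mσ(a) = 0. -/
open MulOpposite

/-- Let `M_R` be `(σ,δ)`-compatible with `m a² = 0 ⟹ m a = 0`. Then
`m σ(a) a = 0` implies `m a = m σ(a) = 0`, and `m a σ(a) = 0` implies `m a = m σ(a) = 0`. -/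
theorem compatible_sq_lemma {R : Type*} [Ring R] (σ : R →+* R) (δ : R → R)
    (hδadd : ∀ a b : R, δ (a + b) = δ a + δ b)
    (hδmul : ∀ a b : R, δ (a * b) = σ a * δ b + δ a * b)
    (M : Type*) [AddCommGroup M] [Module Rᵐᵒᵖ M]
    (hσ : SigmaCompatible ⇑σ M) (hδc : DeltaCompatible δ M)
    (hsq : ∀ (m : M) (a : R), op (a * a) • m = 0 → op a • m = 0) :
    ∀ (m : M) (a : R),
      (op (σ a * a) • m = 0 → op a • m = 0 ∧ op (σ a) • m = 0) ∧
        (op (a * σ a) • m = 0 → op a • m = 0 ∧ op (σ a) • m = 0) := by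
  intro m a
  constructor
  · intro h
    rw [op_mul, mul_smul] at h
    have h2 := (hσ (op (σ a) • m) a).mp h
    rw [← mul_smul, ← op_mul] at h2
    have h3 := hsq m (σ a) h2
    exact ⟨(hσ m a).mpr h3, h3⟩
  · intro h
    rw [op_mul, mul_smul] at h
    have h2 := (hσ (op a • m) a).mpr h
    rw [← mul_smul, ← op_mul] at h2
    have h3 := hsq m a h2
    exact ⟨h3, (hσ m a).mp h3⟩
end
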